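/- Let n ≥ 2 be an even integer and k = n/2. Then for all t ∈ ℝ, (1/2)·B_{n,k}(t) + ∑_{j=k+1}^{n} B_{n,j}(t) = ∑_{j=k}^{n−1} B_{n−1,j}(t); that is, the degree-n expression on the left simplifies to a polynomial of degree n−1. -/

import Mathlib

open Finset

theorem stmt_15 (n : ℕ) (hn : 2 ≤ n) (heven : Even n) (k : ℕ) (hk : k = n / 2) :
    ∀ t : ℝ,
      (1 / 2) * ((n.choose k : ℝ) * t ^ k * (1 - t) ^ (n - k)) +
        ∑ j ∈ Finset.Icc (k + 1) n, (n.choose j : ℝ) * t ^ j * (1 - t) ^ (n - j) =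
      ∑ j ∈ Finset.Icc k (n - 1),
        ((n - 1).choose j : ℝ) * t ^ j * (1 - t) ^ (n - 1 - j) := by
  obtain ⟨r, rfl⟩ := heven
  have hk' : k = r := by omega
  subst hk'
  have hr : 1 ≤ k := by omega
  intro t
  set m := k + k - 1 with hm
  have hmn : k + k = m + 1 := by omega
  set f : ℕ → ℝ := fun j => ((m.choose j : ℝ) * t ^ j * (1 - t) ^ (m - j)) with hf
  have hrhs : Finset.Icc k (k + k - 1) = Finset.Icc k m := by rw [hm]
  -- recurrence for each term
  have step : ∀ j ∈ Finset.Icc (k + 1) (k + k),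
      ((k + k).choose j : ℝ) * t ^ j * (1 - t) ^ (k + k - j)
        = (1 - t) * f j + t * f (j - 1) := by
    intro j hj
    simp only [Finset.mem_Icc] at hj
    obtain ⟨hj1, hj2⟩ := hj
    rcases eq_or_lt_of_le hj2 with h | h
    · subst h
      have h1 : m.choose (k + k) = 0 := Nat.choose_eq_zero_of_lt (by omega)
      have h2 : k + k - 1 = m := rfl
      have h3 : m.choose (k + k - 1) = 1 := by rw [h2, Nat.choose_self]
      have h4 : m - (k + k - 1) = 0 := by omega
      have h5 : k + k - (k + k) = 0 := by omega
      have h6 : ((k + k).choose (k + k)) = 1 := Nat.choose_self _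
      simp only [hf]
      rw [h1, h3, h4, h5, h6]
      have ht : t ^ (k + k) = t * t ^ (k + k - 1) := by
        conv_lhs => rw [show k + k = (k + k - 1) + 1 from by omega]
        rw [pow_succ']
      rw [ht]; push_cast; ring
    · have hjm : j ≤ m := by omega
      obtain ⟨i, rfl⟩ : ∃ i, j = i + 1 := ⟨j - 1, by omega⟩
      have hp : (k + k).choose (i + 1) = m.choose i + m.choose (i + 1) := by
        rw [hmn]; exact Nat.choose_succ_succ m i
      have e1 : k + k - (i + 1) = (m - (i + 1)) + 1 := by omega
      have e2 : m - i = (m - (i + 1)) + 1 := by omega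
      have e3 : i + 1 - 1 = i := rfl
      rw [hp, e1, e3]
      simp only [hf, e2]
      push_cast
      ring
  rw [Finset.sum_congr rfl step, Finset.sum_add_distrib, ← Finset.mul_sum, ← Finset.mul_sum]
  -- first sum: drop the top (zero) term
  have sum1 : ∑ j ∈ Finset.Icc (k + 1) (k + k), f j
      = ∑ j ∈ Finset.Icc (k + 1) m, f j := by
    rw [hmn, Finset.sum_Icc_succ_top (by omega)]
    have : f (m + 1) = 0 := by
      simp [hf, Nat.choose_eq_zero_of_lt (by omega : m < m + 1)]
    rw [this, add_zero]
  -- second sum: reindex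
  have sum2 : ∑ j ∈ Finset.Icc (k + 1) (k + k), f (j - 1)
      = ∑ j ∈ Finset.Icc k m, f j := by
    have : Finset.Icc (k + 1) (k + k) = (Finset.Icc k m).map (addRightEmbedding 1) := by
      rw [Finset.map_add_right_Icc, ← hmn]
    rw [this, Finset.sum_map]
    refine Finset.sum_congr rfl fun x _ => ?_
    simp [addRightEmbedding]
  rw [sum1, sum2, hrhs]
  -- split off bottom term of Icc k m
  have hsplit : Finset.Icc k m = insert k (Finset.Icc (k + 1) m) := by
    ext x; simp only [Finset.mem_Icc, Finset.mem_insert]; omega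
  have hknot : k ∉ Finset.Icc (k + 1) m := by simp
  rw [hsplit, Finset.sum_insert hknot]
  -- half-term identity
  have hhalf : (1 / 2 : ℝ) * ((k + k).choose k : ℝ) * t ^ k * (1 - t) ^ (k + k - k)
      = (1 - t) * f k := by
    have hc : (k + k).choose k = 2 * m.choose k := by
      have h1 : (k + k).choose k = m.choose (k - 1) + m.choose k := by
        rw [hmn]
        have : k = (k - 1) + 1 := by omega
        rw [this]
        exact Nat.choose_succ_succ m (k - 1)
      have h2 : m.choose (k - 1) = m.choose k := by
        have : k - 1 = m - k := by omega
        rw [this, Nat.choose_symm (by omega)]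
      omega
    have e1 : k + k - k = (m - k) + 1 := by omega
    rw [hc, e1]
    simp only [hf]
    push_cast
    ring
  have LHS : (1 / 2) * (((k + k).choose k : ℝ) * t ^ k * (1 - t) ^ (k + k - k))
      = (1 - t) * f k := by rw [← hhalf]; ring
  rw [LHS]
  ring
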